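/- Under the setting of the derivative identity for V along solutions of ẋ(t) = ∑_{j=1}^{M} Γ_j f_j(x(t)) + B u(t): if in addition the block matrix Q is negative semidefinite, then along every solution, for all t, d/dt V(x(t)) ≤ − ∑_{j=1}^{M} f_j(x(t))^⊤ Ξ^j f_j(x(t)) − 2 ∑_{j=1}^{M} x(t)^⊤ Υ_{0,j} f_j(x(t)) − 2 ∑_{s=1}^{M−1} ∑_{z=s+1}^{M} f_s(x(t))^⊤ Υ_{s,z} f_z(x(t)) + (B u(t))^⊤ Φ (B u(t)). -/

import Mathlib

open Filter Matrix Finset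

lemma dot_tr {n : ℕ} (A : Matrix (Fin n) (Fin n) ℝ) (v w : Fin n → ℝ) :
    v ⬝ᵥ Aᵀ.mulVec w = w ⬝ᵥ A.mulVec v := by
  simp only [dotProduct, Matrix.mulVec, Matrix.transpose_apply, Finset.mul_sum]
  rw [Finset.sum_comm]
  exact Finset.sum_congr rfl fun i _ => Finset.sum_congr rfl fun k _ => by ring

lemma dot_symm {n : ℕ} {A : Matrix (Fin n) (Fin n) ℝ} (hA : A.IsSymm) (v w : Fin n → ℝ) :
    v ⬝ᵥ A.mulVec w = w ⬝ᵥ A.mulVec v := by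
  conv_lhs => rw [← hA]
  exact dot_tr A v w

lemma mulVec_dot_left {n : ℕ} {A : Matrix (Fin n) (Fin n) ℝ} (hA : A.IsSymm)
    (v w : Fin n → ℝ) : (A.mulVec v) ⬝ᵥ w = v ⬝ᵥ A.mulVec w := by
  rw [dotProduct_comm]; exact dot_symm hA w v

lemma pair_split (M : ℕ) (G : ℕ → ℕ → ℝ)
    (hsym : ∀ s ∈ Finset.Icc 1 M, ∀ z ∈ Finset.Icc 1 M, s < z → G z s = G s z) :
    ∑ s ∈ Finset.Icc 1 M, ∑ z ∈ Finset.Icc 1 M, G s z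
      = (∑ j ∈ Finset.Icc 1 M, G j j)
        + 2 * ∑ s ∈ Finset.Icc 1 M, ∑ z ∈ Finset.Icc (s + 1) M, G s z := by
  have hrow : ∀ s ∈ Finset.Icc 1 M, ∑ z ∈ Finset.Icc 1 M, G s z
      = G s s + ∑ z ∈ Finset.Ico 1 s, G s z + ∑ z ∈ Finset.Icc (s + 1) M, G s z := by
    intro s hs
    simp only [Finset.mem_Icc] at hs
    have h1 : Finset.Icc 1 M = insert s (Finset.Ico 1 s ∪ Finset.Icc (s + 1) M) := by
      ext a; simp only [Finset.mem_Icc, Finset.mem_insert, Finset.mem_union, Finset.mem_Ico]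
      omega
    have h2 : s ∉ Finset.Ico 1 s ∪ Finset.Icc (s + 1) M := by
      simp only [Finset.mem_union, Finset.mem_Ico, Finset.mem_Icc]; omega
    have h3 : Disjoint (Finset.Ico 1 s) (Finset.Icc (s + 1) M) := by
      rw [Finset.disjoint_left]; intro a; simp only [Finset.mem_Ico, Finset.mem_Icc]; omega
    rw [h1, Finset.sum_insert h2, Finset.sum_union h3]; ring
  rw [Finset.sum_congr rfl hrow, Finset.sum_add_distrib, Finset.sum_add_distrib]
  have hswap : ∑ s ∈ Finset.Icc 1 M, ∑ z ∈ Finset.Ico 1 s, G s z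
      = ∑ s ∈ Finset.Icc 1 M, ∑ z ∈ Finset.Icc (s + 1) M, G s z := by
    have hcomm := Finset.sum_Ico_Ico_comm' 1 (M + 1) (fun s z => G z s)
    rw [show Finset.Icc 1 M = Finset.Ico 1 (M + 1) from (Finset.Ico_add_one_right_eq_Icc 1 M).symm]
    rw [← hcomm]
    refine Finset.sum_congr rfl fun s hs => ?_
    rw [show Finset.Icc (s + 1) M = Finset.Ico (s + 1) (M + 1) from (Finset.Ico_add_one_right_eq_Icc _ _).symm]
    refine Finset.sum_congr rfl fun z hz => ?_
    simp only [Finset.mem_Ico] at hs hz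
    exact hsym s (by simp only [Finset.mem_Icc]; omega) z (by simp only [Finset.mem_Icc]; omega)
      (by omega)
  rw [hswap]; ring

lemma dot_sumv {n : ℕ} {ι : Type*} (v : Fin n → ℝ) (s : Finset ι) (f : ι → Fin n → ℝ) :
    v ⬝ᵥ (∑ i ∈ s, f i) = ∑ i ∈ s, v ⬝ᵥ f i := by
  simp only [dotProduct, Finset.sum_apply, Finset.mul_sum]
  exact Finset.sum_comm

lemma mulVec_sumv {n : ℕ} {ι : Type*} (A : Matrix (Fin n) (Fin n) ℝ) (s : Finset ι)
    (f : ι → Fin n → ℝ) : A.mulVec (∑ i ∈ s, f i) = ∑ i ∈ s, A.mulVec (f i) := by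
  ext k
  simp only [Matrix.mulVec, dotProduct, Finset.sum_apply, Finset.mul_sum]
  exact Finset.sum_comm

lemma key_ineq (n M : ℕ) (hM : 1 ≤ M)
    (Γ : ℕ → Matrix (Fin n) (Fin n) ℝ)
    (P : Matrix (Fin n) (Fin n) ℝ) (hPsymm : P.IsSymm)
    (Λ Ξ : ℕ → Matrix (Fin n) (Fin n) ℝ) (Υ : ℕ → ℕ → Matrix (Fin n) (Fin n) ℝ)
    (hΛ : ∀ j, 1 ≤ j → j ≤ M → (Λ j).IsDiag)
    (Φ : Matrix (Fin n) (Fin n) ℝ)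
    (Qb : ℕ → ℕ → Matrix (Fin n) (Fin n) ℝ)
    (Q : Matrix (Fin (M + 2) × Fin n) (Fin (M + 2) × Fin n) ℝ)
    (hQ : ∀ (a b : Fin (M + 2)) (i k : Fin n), Q (a, i) (b, k) = Qb a.val b.val i k)
    (hQb00 : Qb 0 0 = 0)
    (hQb0j : ∀ j, 1 ≤ j → j ≤ M → Qb 0 j = P * Γ j + Υ 0 j)
    (hQb0last : Qb 0 (M + 1) = P)
    (hQbjj : ∀ j, 1 ≤ j → j ≤ M → Qb j j = (Γ j)ᵀ * Λ j + Λ j * Γ j + Ξ j)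
    (hQbsz : ∀ s z, 1 ≤ s → s < z → z ≤ M → Qb s z = (Γ s)ᵀ * Λ z + Λ s * Γ z + Υ s z)
    (hQbjlast : ∀ j, 1 ≤ j → j ≤ M → Qb j (M + 1) = Λ j)
    (hQblast : Qb (M + 1) (M + 1) = -Φ)
    (hQbsym : ∀ a b, a ≤ M + 1 → b ≤ M + 1 → Qb b a = (Qb a b)ᵀ)
    (hQns : (-Q).PosSemidef)
    (X Bu : Fin n → ℝ) (F : ℕ → Fin n → ℝ) :
    2 * (X ⬝ᵥ P.mulVec ((∑ j ∈ Finset.Icc 1 M, (Γ j).mulVec (F j)) + Bu))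
      + 2 * ∑ j ∈ Finset.Icc 1 M,
          F j ⬝ᵥ (Λ j).mulVec ((∑ z ∈ Finset.Icc 1 M, (Γ z).mulVec (F z)) + Bu)
    ≤ - ∑ j ∈ Finset.Icc 1 M, F j ⬝ᵥ (Ξ j).mulVec (F j)
      - 2 * ∑ j ∈ Finset.Icc 1 M, X ⬝ᵥ (Υ 0 j).mulVec (F j)
      - 2 * ∑ s ∈ Finset.Icc 1 M, ∑ z ∈ Finset.Icc (s + 1) M, F s ⬝ᵥ (Υ s z).mulVec (F z)
      + Bu ⬝ᵥ Φ.mulVec Bu := by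
  classical
  set W : ℕ → Fin n → ℝ := fun a => if a = 0 then X else if a = M + 1 then Bu else F a with hWdef
  have hW0 : W 0 = X := by simp [hWdef]
  have hWlast : W (M + 1) = Bu := by simp [hWdef]
  have hWmid : ∀ a ∈ Finset.Icc 1 M, W a = F a := by
    intro a ha
    simp only [Finset.mem_Icc] at ha
    simp only [hWdef]
    rw [if_neg (by omega), if_neg (by omega)]
  -- negativity of the quadratic form
  have hle : (fun p : Fin (M + 2) × Fin n => W p.1.val p.2) ⬝ᵥ
      Q.mulVec (fun p : Fin (M + 2) × Fin n => W p.1.val p.2) ≤ 0 := by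
    have h := hQns.dotProduct_mulVec_nonneg (fun p : Fin (M + 2) × Fin n => W p.1.val p.2)
    rw [Matrix.neg_mulVec, dotProduct_neg] at h
    simpa using h
  -- expand the quadratic form into blocks
  have hS : (fun p : Fin (M + 2) × Fin n => W p.1.val p.2) ⬝ᵥ
        Q.mulVec (fun p : Fin (M + 2) × Fin n => W p.1.val p.2)
      = ∑ a ∈ Finset.range (M + 2), ∑ b ∈ Finset.range (M + 2),
          W a ⬝ᵥ (Qb a b).mulVec (W b) := by
    rw [← Fin.sum_univ_eq_sum_range
      (fun a => ∑ b ∈ Finset.range (M + 2), W a ⬝ᵥ (Qb a b).mulVec (W b)) (M + 2)]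
    rw [show (∑ a : Fin (M + 2), ∑ b ∈ Finset.range (M + 2), W a.val ⬝ᵥ (Qb a.val b).mulVec (W b))
        = ∑ a : Fin (M + 2), ∑ b : Fin (M + 2), W a.val ⬝ᵥ (Qb a.val b.val).mulVec (W b.val) from
      Finset.sum_congr rfl fun a _ =>
        (Fin.sum_univ_eq_sum_range (fun b => W a.val ⬝ᵥ (Qb a.val b).mulVec (W b)) (M + 2)).symm]
    simp only [dotProduct, Matrix.mulVec, Fintype.sum_prod_type, hQ]
    refine Finset.sum_congr rfl fun a _ => ?_
    rw [Finset.sum_comm]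
    refine Finset.sum_congr rfl fun b _ => ?_
    rw [Finset.mul_sum]
  -- range decomposition
  have hrange : Finset.range (M + 2) = insert 0 (insert (M + 1) (Finset.Icc 1 M)) := by
    ext a
    simp only [Finset.mem_range, Finset.mem_insert, Finset.mem_Icc]
    omega
  have h0ni : (0 : ℕ) ∉ insert (M + 1) (Finset.Icc 1 M) := by
    simp only [Finset.mem_insert, Finset.mem_Icc]; omega
  have hMni : M + 1 ∉ Finset.Icc 1 M := by simp only [Finset.mem_Icc]; omega
  rw [hrange] at hS
  simp only [Finset.sum_insert h0ni, Finset.sum_insert hMni] at hS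
  -- atomic sums
  -- block evaluations
  have e1 : W 0 ⬝ᵥ Qb 0 0 *ᵥ W 0 = 0 := by rw [hQb00]; simp
  have e2 : W 0 ⬝ᵥ Qb 0 (M + 1) *ᵥ W (M + 1) = X ⬝ᵥ P *ᵥ Bu := by
    rw [hW0, hWlast, hQb0last]
  have e3 : ∀ b ∈ Finset.Icc 1 M, W 0 ⬝ᵥ Qb 0 b *ᵥ W b
      = X ⬝ᵥ P *ᵥ (Γ b *ᵥ F b) + X ⬝ᵥ Υ 0 b *ᵥ F b := by
    intro b hb
    obtain ⟨hb1, hb2⟩ := Finset.mem_Icc.mp hb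
    rw [hW0, hWmid b hb, hQb0j b hb1 hb2, Matrix.add_mulVec, dotProduct_add,
      ← Matrix.mulVec_mulVec]
  have e4 : W (M + 1) ⬝ᵥ Qb (M + 1) 0 *ᵥ W 0 = X ⬝ᵥ P *ᵥ Bu := by
    rw [hW0, hWlast, hQbsym 0 (M + 1) (by omega) (by omega), hQb0last, dot_tr]
  have e5 : W (M + 1) ⬝ᵥ Qb (M + 1) (M + 1) *ᵥ W (M + 1) = -(Bu ⬝ᵥ Φ *ᵥ Bu) := by
    rw [hWlast, hQblast, Matrix.neg_mulVec, dotProduct_neg]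
  have e6 : ∀ b ∈ Finset.Icc 1 M, W (M + 1) ⬝ᵥ Qb (M + 1) b *ᵥ W b
      = F b ⬝ᵥ Λ b *ᵥ Bu := by
    intro b hb
    obtain ⟨hb1, hb2⟩ := Finset.mem_Icc.mp hb
    rw [hWlast, hWmid b hb, hQbsym b (M + 1) (by omega) (by omega), hQbjlast b hb1 hb2, dot_tr]
  have e789 : ∀ a ∈ Finset.Icc 1 M,
      W a ⬝ᵥ Qb a 0 *ᵥ W 0 + (W a ⬝ᵥ Qb a (M + 1) *ᵥ W (M + 1)
        + ∑ b ∈ Finset.Icc 1 M, W a ⬝ᵥ Qb a b *ᵥ W b)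
      = (X ⬝ᵥ P *ᵥ (Γ a *ᵥ F a) + X ⬝ᵥ Υ 0 a *ᵥ F a) + (F a ⬝ᵥ Λ a *ᵥ Bu
        + ∑ b ∈ Finset.Icc 1 M, F a ⬝ᵥ Qb a b *ᵥ F b) := by
    intro a ha
    obtain ⟨ha1, ha2⟩ := Finset.mem_Icc.mp ha
    rw [hW0, hWlast, hWmid a ha, hQbsym 0 a (by omega) (by omega),
      hQbjlast a ha1 ha2, dot_tr, hQb0j a ha1 ha2, Matrix.add_mulVec,
      dotProduct_add, ← Matrix.mulVec_mulVec]
    congr 2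
    exact Finset.sum_congr rfl fun b hb => by rw [hWmid b hb]
  rw [e1, e2, e4, e5, Finset.sum_congr rfl e3, Finset.sum_congr rfl e6,
    Finset.sum_congr rfl e789] at hS
  -- the inner pairs sum
  have hsymG : ∀ s ∈ Finset.Icc 1 M, ∀ z ∈ Finset.Icc 1 M, s < z →
      F z ⬝ᵥ Qb z s *ᵥ F s = F s ⬝ᵥ Qb s z *ᵥ F z := by
    intro s hs z hz hlt
    obtain ⟨_, hz2⟩ := Finset.mem_Icc.mp hz
    rw [hQbsym s z (by omega) (by omega), dot_tr]
  have ed : ∀ j ∈ Finset.Icc 1 M, F j ⬝ᵥ Qb j j *ᵥ F j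
      = F j ⬝ᵥ Λ j *ᵥ (Γ j *ᵥ F j) + F j ⬝ᵥ Λ j *ᵥ (Γ j *ᵥ F j)
        + F j ⬝ᵥ Ξ j *ᵥ F j := by
    intro j hj
    obtain ⟨hj1, hj2⟩ := Finset.mem_Icc.mp hj
    rw [hQbjj j hj1 hj2, Matrix.add_mulVec, Matrix.add_mulVec, dotProduct_add,
      dotProduct_add, ← Matrix.mulVec_mulVec, ← Matrix.mulVec_mulVec, dot_tr,
      mulVec_dot_left ((hΛ j hj1 hj2).isSymm)]
  have eod : ∀ s ∈ Finset.Icc 1 M, ∀ z ∈ Finset.Icc (s + 1) M,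
      F s ⬝ᵥ Qb s z *ᵥ F z
      = F z ⬝ᵥ Λ z *ᵥ (Γ s *ᵥ F s) + F s ⬝ᵥ Λ s *ᵥ (Γ z *ᵥ F z)
        + F s ⬝ᵥ Υ s z *ᵥ F z := by
    intro s hs z hz
    obtain ⟨hs1, hs2⟩ := Finset.mem_Icc.mp hs
    obtain ⟨hz1, hz2⟩ := Finset.mem_Icc.mp hz
    rw [hQbsz s z hs1 (by omega) hz2, Matrix.add_mulVec, Matrix.add_mulVec,
      dotProduct_add, dotProduct_add, ← Matrix.mulVec_mulVec,
      ← Matrix.mulVec_mulVec, dot_tr, mulVec_dot_left ((hΛ z (by omega) hz2).isSymm)]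
  have e9 : ∑ s ∈ Finset.Icc 1 M, ∑ z ∈ Finset.Icc 1 M, F s ⬝ᵥ Qb s z *ᵥ F z
      = (∑ j ∈ Finset.Icc 1 M, (F j ⬝ᵥ Λ j *ᵥ (Γ j *ᵥ F j) + F j ⬝ᵥ Λ j *ᵥ (Γ j *ᵥ F j)
          + F j ⬝ᵥ Ξ j *ᵥ F j))
        + 2 * ∑ s ∈ Finset.Icc 1 M, ∑ z ∈ Finset.Icc (s + 1) M,
            (F z ⬝ᵥ Λ z *ᵥ (Γ s *ᵥ F s) + F s ⬝ᵥ Λ s *ᵥ (Γ z *ᵥ F z)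
              + F s ⬝ᵥ Υ s z *ᵥ F z) := by
    rw [pair_split M _ hsymG, Finset.sum_congr rfl ed]
    congr 1
    rw [Finset.sum_congr rfl fun s hs => Finset.sum_congr rfl fun z hz => eod s hs z hz]
  -- the K-identity
  have hK : 2 * (∑ s ∈ Finset.Icc 1 M, ∑ z ∈ Finset.Icc 1 M,
        F s ⬝ᵥ Λ s *ᵥ (Γ z *ᵥ F z))
      = (∑ j ∈ Finset.Icc 1 M,
          (F j ⬝ᵥ Λ j *ᵥ (Γ j *ᵥ F j) + F j ⬝ᵥ Λ j *ᵥ (Γ j *ᵥ F j)))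
        + 2 * ∑ s ∈ Finset.Icc 1 M, ∑ z ∈ Finset.Icc (s + 1) M,
            (F z ⬝ᵥ Λ z *ᵥ (Γ s *ᵥ F s) + F s ⬝ᵥ Λ s *ᵥ (Γ z *ᵥ F z)) := by
    rw [← pair_split M
      (fun s z => F z ⬝ᵥ Λ z *ᵥ (Γ s *ᵥ F s) + F s ⬝ᵥ Λ s *ᵥ (Γ z *ᵥ F z))
      (by intro s _ z _ _; ring)]
    simp only [Finset.sum_add_distrib]
    rw [Finset.sum_comm]
    ring
  -- linearity on the goal's left side
  have hlin1 : X ⬝ᵥ P *ᵥ ((∑ j ∈ Finset.Icc 1 M, Γ j *ᵥ F j) + Bu)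
      = (∑ j ∈ Finset.Icc 1 M, X ⬝ᵥ P *ᵥ Γ j *ᵥ F j) + X ⬝ᵥ P *ᵥ Bu := by
    rw [Matrix.mulVec_add, dotProduct_add, mulVec_sumv, dot_sumv]
  have hlin2 : ∀ j ∈ Finset.Icc 1 M,
      F j ⬝ᵥ Λ j *ᵥ ((∑ z ∈ Finset.Icc 1 M, Γ z *ᵥ F z) + Bu)
      = (∑ z ∈ Finset.Icc 1 M, F j ⬝ᵥ Λ j *ᵥ (Γ z *ᵥ F z)) + F j ⬝ᵥ Λ j *ᵥ Bu := by
    intro j _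
    rw [Matrix.mulVec_add, dotProduct_add, mulVec_sumv, dot_sumv]
  simp only [Finset.sum_add_distrib] at hS
  rw [e9] at hS
  simp only [Finset.sum_add_distrib] at hS hK
  rw [hlin1, Finset.sum_congr rfl hlin2, Finset.sum_add_distrib]
  linarith [hle, hS, hK]


lemma diag_dot {n : ℕ} {A : Matrix (Fin n) (Fin n) ℝ} (hA : A.IsDiag)
    (w v : Fin n → ℝ) : w ⬝ᵥ A.mulVec v = ∑ i, A i i * (w i * v i) := by
  simp only [dotProduct, Matrix.mulVec]
  refine Finset.sum_congr rfl fun i _ => ?_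
  rw [show (∑ k, A i k * v k) = A i i * v i from
    Finset.sum_eq_single i (fun b _ hb => by rw [hA (Ne.symm hb), zero_mul])
      (fun h => absurd (Finset.mem_univ i) h)]
  ring

lemma hasDerivAt_quad {n : ℕ} (P : Matrix (Fin n) (Fin n) ℝ) (x : ℝ → Fin n → ℝ)
    (v : Fin n → ℝ) (t : ℝ) (hx : ∀ i, HasDerivAt (fun s => x s i) (v i) t) :
    HasDerivAt (fun s => x s ⬝ᵥ P.mulVec (x s))
      (v ⬝ᵥ P.mulVec (x t) + x t ⬝ᵥ P.mulVec v) t := by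
  have h : ∀ s, x s ⬝ᵥ P.mulVec (x s) = ∑ i, ∑ k, P i k * (x s i * x s k) := by
    intro s
    simp only [dotProduct, Matrix.mulVec, Finset.mul_sum]
    exact Finset.sum_congr rfl fun i _ => Finset.sum_congr rfl fun k _ => by ring
  simp only [h]
  have hder := HasDerivAt.fun_sum (u := Finset.univ)
    (A := fun i s => ∑ k, P i k * (x s i * x s k))
    (A' := fun i => ∑ k, P i k * (v i * x t k + x t i * v k)) (x := t)
    (fun i _ => HasDerivAt.fun_sum fun k _ => (((hx i).mul (hx k)).const_mul (P i k)))
  refine hder.congr_deriv ?_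
  symm
  simp only [dotProduct, Matrix.mulVec, Finset.mul_sum, ← Finset.sum_add_distrib]
  refine Finset.sum_congr rfl fun i _ => ?_
  exact Finset.sum_congr rfl fun k _ => by ring


/-- **Derivative bound for the Lyapunov function along solutions** of
`ẋ = ∑_{j=1}^M Γ_j f_j(x) + B u` when the block matrix `Q` is negative semidefinite:
`d/dt V(x(t)) ≤ − ∑_j f_jᵀ Ξʲ f_j − 2 ∑_j xᵀ Υ₀ⱼ f_j − 2 ∑_{s<z} f_sᵀ Υ_{s,z} f_z
  + (Bu)ᵀ Φ (Bu)`. -/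
theorem lyapunov_derivative_bound
    (n m M : ℕ) (hM : 1 ≤ M)
    (Γ : ℕ → Matrix (Fin n) (Fin n) ℝ) (B : Matrix (Fin n) (Fin m) ℝ)
    (g : ℕ → Fin n → ℝ → ℝ)
    (hcont : ∀ j, 1 ≤ j → j ≤ M → ∀ i, Continuous (g j i))
    (P : Matrix (Fin n) (Fin n) ℝ) (hPsymm : P.IsSymm)
    (Λ Ξ : ℕ → Matrix (Fin n) (Fin n) ℝ) (Υ : ℕ → ℕ → Matrix (Fin n) (Fin n) ℝ)
    (hΛ : ∀ j, 1 ≤ j → j ≤ M → (Λ j).IsDiag)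
    (hΞ : ∀ j, 1 ≤ j → j ≤ M → (Ξ j).IsDiag)
    (hΥ : ∀ s z, s < z → z ≤ M → (Υ s z).IsDiag)
    (Φ : Matrix (Fin n) (Fin n) ℝ) (hΦsymm : Φ.IsSymm)
    -- the Lyapunov function V
    (V : (Fin n → ℝ) → ℝ)
    (hV : ∀ y : Fin n → ℝ,
      V y = y ⬝ᵥ P.mulVec y +
        2 * ∑ j ∈ Finset.Icc 1 M, ∑ i, Λ j i i * ∫ ν in (0:ℝ)..(y i), g j i ν)
    -- the block matrix Q
    (Qb : ℕ → ℕ → Matrix (Fin n) (Fin n) ℝ)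
    (Q : Matrix (Fin (M + 2) × Fin n) (Fin (M + 2) × Fin n) ℝ)
    (hQ : ∀ (a b : Fin (M + 2)) (i k : Fin n), Q (a, i) (b, k) = Qb a.val b.val i k)
    (hQb00 : Qb 0 0 = 0)
    (hQb0j : ∀ j, 1 ≤ j → j ≤ M → Qb 0 j = P * Γ j + Υ 0 j)
    (hQb0last : Qb 0 (M + 1) = P)
    (hQbjj : ∀ j, 1 ≤ j → j ≤ M → Qb j j = (Γ j)ᵀ * Λ j + Λ j * Γ j + Ξ j)
    (hQbsz : ∀ s z, 1 ≤ s → s < z → z ≤ M → Qb s z = (Γ s)ᵀ * Λ z + Λ s * Γ z + Υ s z)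
    (hQbjlast : ∀ j, 1 ≤ j → j ≤ M → Qb j (M + 1) = Λ j)
    (hQblast : Qb (M + 1) (M + 1) = -Φ)
    (hQbsym : ∀ a b, a ≤ M + 1 → b ≤ M + 1 → Qb b a = (Qb a b)ᵀ)
    -- Q is negative semidefinite
    (hQns : (-Q).PosSemidef)
    -- a solution on [0, T) with continuous input
    (T : ℝ) (u : ℝ → Fin m → ℝ) (hu : Continuous u)
    (x : ℝ → Fin n → ℝ)
    (hx : ∀ t ∈ Set.Ico 0 T, HasDerivAt x
      (∑ j ∈ Finset.Icc 1 M, (Γ j).mulVec (fun i => g j i (x t i)) + B.mulVec (u t)) t) :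
    ∀ t ∈ Set.Ico 0 T, ∀ d : ℝ, HasDerivAt (fun s => V (x s)) d t →
      d ≤ - ∑ j ∈ Finset.Icc 1 M,
            (fun i => g j i (x t i)) ⬝ᵥ (Ξ j).mulVec (fun i => g j i (x t i))
        - 2 * ∑ j ∈ Finset.Icc 1 M, x t ⬝ᵥ (Υ 0 j).mulVec (fun i => g j i (x t i))
        - 2 * ∑ s ∈ Finset.Icc 1 (M - 1), ∑ z ∈ Finset.Icc (s + 1) M,
            (fun i => g s i (x t i)) ⬝ᵥ (Υ s z).mulVec (fun i => g z i (x t i))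
        + B.mulVec (u t) ⬝ᵥ Φ.mulVec (B.mulVec (u t)) := by
  intro t ht d hd
  set v : Fin n → ℝ :=
    (∑ j ∈ Finset.Icc 1 M, (Γ j).mulVec fun i => g j i (x t i)) + B.mulVec (u t) with hv
  have hxd : HasDerivAt x v t := hx t ht
  have hxc : ∀ i, HasDerivAt (fun s => x s i) (v i) t := fun i => hasDerivAt_pi.mp hxd i
  have hsum : HasDerivAt
      (fun s => ∑ j ∈ Finset.Icc 1 M, ∑ i, Λ j i i * ∫ ν in (0:ℝ)..(x s i), g j i ν)
      (∑ j ∈ Finset.Icc 1 M, ∑ i, Λ j i i * (g j i (x t i) * v i)) t := by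
    refine HasDerivAt.fun_sum fun j hj => HasDerivAt.fun_sum fun i _ => ?_
    obtain ⟨hj1, hj2⟩ := Finset.mem_Icc.mp hj
    exact ((((hcont j hj1 hj2 i).integral_hasStrictDerivAt 0
      (x t i)).hasDerivAt.comp t (hxc i)).const_mul (Λ j i i))
  have hd2 : HasDerivAt (fun s => V (x s))
      (v ⬝ᵥ P.mulVec (x t) + x t ⬝ᵥ P.mulVec v
        + 2 * ∑ j ∈ Finset.Icc 1 M, ∑ i, Λ j i i * (g j i (x t i) * v i)) t := by
    have hVx : (fun s => V (x s)) = fun s => x s ⬝ᵥ P.mulVec (x s) +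
        2 * ∑ j ∈ Finset.Icc 1 M, ∑ i, Λ j i i * ∫ ν in (0:ℝ)..(x s i), g j i ν :=
      funext fun s => hV (x s)
    rw [hVx]
    exact (hasDerivAt_quad P x v t hxc).add (hsum.const_mul 2)
  have hdeq := hd.unique hd2
  have hd3 : d = 2 * (x t ⬝ᵥ P.mulVec v)
      + 2 * ∑ j ∈ Finset.Icc 1 M, (fun i => g j i (x t i)) ⬝ᵥ (Λ j).mulVec v := by
    rw [hdeq, dot_symm hPsymm]
    rw [Finset.sum_congr rfl (fun j hj => by
      obtain ⟨hj1, hj2⟩ := Finset.mem_Icc.mp hj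
      exact (diag_dot (hΛ j hj1 hj2) (fun i => g j i (x t i)) v).symm :
        ∀ j ∈ Finset.Icc 1 M, (∑ i, Λ j i i * (g j i (x t i) * v i))
          = (fun i => g j i (x t i)) ⬝ᵥ (Λ j).mulVec v)]
    ring
  have hMM : (∑ s ∈ Finset.Icc 1 (M - 1), ∑ z ∈ Finset.Icc (s + 1) M,
        (fun i => g s i (x t i)) ⬝ᵥ (Υ s z).mulVec (fun i => g z i (x t i)))
      = ∑ s ∈ Finset.Icc 1 M, ∑ z ∈ Finset.Icc (s + 1) M,
        (fun i => g s i (x t i)) ⬝ᵥ (Υ s z).mulVec (fun i => g z i (x t i)) := by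
    refine Finset.sum_subset ?_ ?_
    · intro a ha
      simp only [Finset.mem_Icc] at ha ⊢
      omega
    · intro s hs hns
      simp only [Finset.mem_Icc] at hs hns
      rw [show Finset.Icc (s + 1) M = ∅ from Finset.Icc_eq_empty (by omega)]
      simp
  rw [hd3, hv, hMM]
  exact key_ineq n M hM Γ P hPsymm Λ Ξ Υ hΛ Φ Qb Q hQ hQb00 hQb0j hQb0last hQbjj hQbsz
    hQbjlast hQblast hQbsym hQns (x t) (B.mulVec (u t)) (fun j => fun i => g j i (x t i))
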